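/- Let N ≥ 1, let v be a smooth vector field on ℝ^N and c : ℝ^N → ℝ a smooth function. For smooth covector fields α, β on ℝ^N define the bracket [α,β]_v := c·( β(v)·L_v α − α(v)·L_v β ). Then for all smooth functions f, g, h : ℝ^N → ℝ the cyclic Jacobi identity holds: [[df,dg]_v, dh]_v + [[dh,df]_v, dg]_v + [[dg,dh]_v, df]_v = 0. -/

import Mathlib

open scoped ContDiff

/-- Partial derivative `∂f/∂x_s` at `x`. -/
noncomputable def pd {N : ℕ} (s : Fin N) (f : (Fin N → ℝ) → ℝ) (x : Fin N → ℝ) : ℝ :=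
  fderiv ℝ f x (Pi.single s 1)

/-- Pairing `α(v) = ∑ s, α_s v_s` of a covector field with a vector field. -/
noncomputable def pairing {N : ℕ} (α v : (Fin N → ℝ) → (Fin N → ℝ)) (x : Fin N → ℝ) : ℝ :=
  ∑ s, α x s * v x s

/-- Lie derivative of a covector field `α` along a vector field `v`:
`(L_v α)_k = ∑ s (v_s ∂α_k/∂x_s + α_s ∂v_s/∂x_k)`. -/
noncomputable def lieD {N : ℕ} (v α : (Fin N → ℝ) → (Fin N → ℝ)) (x : Fin N → ℝ)
    (k : Fin N) : ℝ :=
  ∑ s, (v x s * pd s (fun y => α y k) x + α x s * pd k (fun y => v y s) x)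

/-- The differential `df`, with components `(df)_k = ∂f/∂x_k`. -/
noncomputable def dF {N : ℕ} (f : (Fin N → ℝ) → ℝ) (x : Fin N → ℝ) (k : Fin N) : ℝ :=
  pd k f x

/-- The bracket `[α,β]_v = c (β(v) L_v α − α(v) L_v β)`. -/
noncomputable def brktV {N : ℕ} (c : (Fin N → ℝ) → ℝ) (v : (Fin N → ℝ) → (Fin N → ℝ))
    (α β : (Fin N → ℝ) → (Fin N → ℝ)) (x : Fin N → ℝ) (k : Fin N) : ℝ :=
  c x * (pairing β v x * lieD v α x k - pairing α v x * lieD v β x k)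

/-! ### Auxiliary lemmas -/

section Aux

variable {N : ℕ}

theorem pd_contDiff {f : (Fin N → ℝ) → ℝ} (hf : ContDiff ℝ ∞ f) (s : Fin N) :
    ContDiff ℝ ∞ (pd s f) :=
  (hf.fderiv_right (m := ∞) (by simp)).clm_apply contDiff_const

theorem pd_diffAt {f : (Fin N → ℝ) → ℝ} (hf : ContDiff ℝ ∞ f) (s : Fin N) (x : Fin N → ℝ) :
    DifferentiableAt ℝ (pd s f) x :=
  ((pd_contDiff hf s).differentiable (by decide)).differentiableAt

theorem cd_diffAt {f : (Fin N → ℝ) → ℝ} (hf : ContDiff ℝ ∞ f) (x : Fin N → ℝ) :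
    DifferentiableAt ℝ f x :=
  (hf.differentiable (by decide)).differentiableAt

theorem pd_mul {f g : (Fin N → ℝ) → ℝ} {x : Fin N → ℝ} (k : Fin N)
    (hf : DifferentiableAt ℝ f x) (hg : DifferentiableAt ℝ g x) :
    pd k (fun y => f y * g y) x = pd k f x * g x + f x * pd k g x := by
  simp [pd, fderiv_fun_mul hf hg, mul_comm, add_comm]

theorem pd_sub {f g : (Fin N → ℝ) → ℝ} {x : Fin N → ℝ} (k : Fin N)
    (hf : DifferentiableAt ℝ f x) (hg : DifferentiableAt ℝ g x) :
    pd k (fun y => f y - g y) x = pd k f x - pd k g x := by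
  simp [pd, fderiv_fun_sub hf hg]

theorem pd_sum {F : Fin N → (Fin N → ℝ) → ℝ} {x : Fin N → ℝ} (k : Fin N)
    (hF : ∀ s, DifferentiableAt ℝ (F s) x) :
    pd k (fun y => ∑ s, F s y) x = ∑ s, pd k (F s) x := by
  simp [pd, fderiv_fun_sum (fun s _ => hF s)]

theorem pd_comm {f : (Fin N → ℝ) → ℝ} (hf : ContDiff ℝ ∞ f) (s k : Fin N)
    (x : Fin N → ℝ) : pd s (pd k f) x = pd k (pd s f) x := by
  have hdf : Differentiable ℝ (fderiv ℝ f) :=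
    (hf.fderiv_right (m := ∞) (by simp)).differentiable (by decide)
  have key : ∀ u w : Fin N → ℝ,
      fderiv ℝ (fun y => fderiv ℝ f y u) x w = fderiv ℝ (fderiv ℝ f) x w u := by
    intro u w
    have : fderiv ℝ (fun y => fderiv ℝ f y u) x
        = (ContinuousLinearMap.apply ℝ ℝ u).comp (fderiv ℝ (fderiv ℝ f) x) :=
      (((ContinuousLinearMap.apply ℝ ℝ u).hasFDerivAt).comp x (hdf x).hasFDerivAt).fderiv
    rw [this]; rfl
  have hsym : ∀ a b, fderiv ℝ (fderiv ℝ f) x a b = fderiv ℝ (fderiv ℝ f) x b a :=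
    (hf.contDiffAt (x := x)).isSymmSndFDerivAt (by simp; exact WithTop.coe_le_coe.mpr le_top)
  unfold pd
  rw [key, key, hsym]

variable {v : (Fin N → ℝ) → (Fin N → ℝ)}

/-- The derivative `v(f) = ∑ s (∂f/∂x_s) v_s` of `f` along `v`. -/
noncomputable def Dop (v : (Fin N → ℝ) → (Fin N → ℝ)) (f : (Fin N → ℝ) → ℝ)
    (x : Fin N → ℝ) : ℝ :=
  ∑ s, pd s f x * v x s

theorem Dop_contDiff (hv : ContDiff ℝ ∞ v) {f : (Fin N → ℝ) → ℝ}
    (hf : ContDiff ℝ ∞ f) : ContDiff ℝ ∞ (Dop v f) :=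
  ContDiff.sum fun s _ => (pd_contDiff hf s).mul (contDiff_pi.mp hv s)

theorem pairing_dF (f : (Fin N → ℝ) → ℝ) (x : Fin N → ℝ) :
    pairing (dF f) v x = Dop v f x := rfl

theorem lieD_dF (hv : ContDiff ℝ ∞ v) {f : (Fin N → ℝ) → ℝ} (hf : ContDiff ℝ ∞ f)
    (x : Fin N → ℝ) (k : Fin N) :
    lieD v (dF f) x k = pd k (Dop v f) x := by
  have hdv : ∀ s, DifferentiableAt ℝ (fun y => v y s) x := fun s =>
    cd_diffAt (contDiff_pi.mp hv s) x
  unfold lieD Dop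
  rw [pd_sum k (fun s => ((pd_diffAt hf s x).fun_mul (hdv s)))]
  refine Finset.sum_congr rfl fun s _ => ?_
  rw [pd_mul k (pd_diffAt hf s x) (hdv s)]
  have e1 : pd s (fun y => dF f y k) x = pd k (pd s f) x := pd_comm hf s k x
  rw [e1]
  show v x s * pd k (pd s f) x + pd s f x * pd k (fun y => v y s) x = _
  ring

theorem Dop_mul (hv : ContDiff ℝ ∞ v) {φ ψ : (Fin N → ℝ) → ℝ}
    (hφ : ContDiff ℝ ∞ φ) (hψ : ContDiff ℝ ∞ ψ) (x : Fin N → ℝ) :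
    Dop v (fun y => φ y * ψ y) x = Dop v φ x * ψ x + φ x * Dop v ψ x := by
  unfold Dop
  rw [Finset.sum_mul, Finset.mul_sum, ← Finset.sum_add_distrib]
  refine Finset.sum_congr rfl fun s _ => ?_
  rw [pd_mul s (cd_diffAt hφ x) (cd_diffAt hψ x)]
  ring

theorem pairing_comb {φ ψ A B : (Fin N → ℝ) → ℝ} (x : Fin N → ℝ) :
    pairing (fun y s => φ y * pd s A y - ψ y * pd s B y) v x
      = φ x * Dop v A x - ψ x * Dop v B x := by
  unfold pairing Dop
  rw [Finset.mul_sum, Finset.mul_sum, ← Finset.sum_sub_distrib]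
  refine Finset.sum_congr rfl fun s _ => ?_
  ring

theorem lieD_comb (hv : ContDiff ℝ ∞ v) {φ ψ A B : (Fin N → ℝ) → ℝ}
    (hφ : ContDiff ℝ ∞ φ) (hψ : ContDiff ℝ ∞ ψ)
    (hA : ContDiff ℝ ∞ A) (hB : ContDiff ℝ ∞ B) (x : Fin N → ℝ) (k : Fin N) :
    lieD v (fun y s => φ y * pd s A y - ψ y * pd s B y) x k
      = Dop v φ x * pd k A x + φ x * pd k (Dop v A) x
        - (Dop v ψ x * pd k B x + ψ x * pd k (Dop v B) x) := by
  have hdv : ∀ s, DifferentiableAt ℝ (fun y => v y s) x := fun s =>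
    cd_diffAt (contDiff_pi.mp hv s) x
  have eL : ∀ s : Fin N, pd s (fun y => φ y * pd k A y - ψ y * pd k B y) x
      = pd s φ x * pd k A x + φ x * pd k (pd s A) x
        - (pd s ψ x * pd k B x + ψ x * pd k (pd s B) x) := by
    intro s
    rw [pd_sub s ((cd_diffAt hφ x).fun_mul (pd_diffAt hA k x))
      ((cd_diffAt hψ x).fun_mul (pd_diffAt hB k x)),
      pd_mul s (cd_diffAt hφ x) (pd_diffAt hA k x),
      pd_mul s (cd_diffAt hψ x) (pd_diffAt hB k x),
      pd_comm hA s k x, pd_comm hB s k x]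
  have epA : pd k (Dop v A) x
      = ∑ s, (pd k (pd s A) x * v x s + pd s A x * pd k (fun y => v y s) x) := by
    unfold Dop
    rw [pd_sum k (fun s => (pd_diffAt hA s x).fun_mul (hdv s))]
    exact Finset.sum_congr rfl fun s _ =>
      pd_mul k (pd_diffAt hA s x) (hdv s)
  have epB : pd k (Dop v B) x
      = ∑ s, (pd k (pd s B) x * v x s + pd s B x * pd k (fun y => v y s) x) := by
    unfold Dop
    rw [pd_sum k (fun s => (pd_diffAt hB s x).fun_mul (hdv s))]
    exact Finset.sum_congr rfl fun s _ =>
      pd_mul k (pd_diffAt hB s x) (hdv s)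
  unfold lieD
  rw [epA, epB, show Dop v φ x = ∑ s, pd s φ x * v x s from rfl,
    show Dop v ψ x = ∑ s, pd s ψ x * v x s from rfl,
    Finset.sum_mul, Finset.sum_mul, Finset.mul_sum, Finset.mul_sum,
    ← Finset.sum_add_distrib, ← Finset.sum_add_distrib, ← Finset.sum_sub_distrib]
  refine Finset.sum_congr rfl fun s _ => ?_
  rw [eL s]
  ring

theorem brktV_dF_eq (hv : ContDiff ℝ ∞ v) {c f g : (Fin N → ℝ) → ℝ}
    (hc : ContDiff ℝ ∞ c) (hf : ContDiff ℝ ∞ f) (hg : ContDiff ℝ ∞ g) :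
    brktV c v (dF f) (dF g)
      = fun y s => (c y * Dop v g y) * pd s (Dop v f) y
          - (c y * Dop v f y) * pd s (Dop v g) y := by
  funext y s
  unfold brktV
  rw [pairing_dF, pairing_dF, lieD_dF hv hf, lieD_dF hv hg]
  ring

/-- Fully expanded form of the iterated bracket on differentials. -/
theorem brkt_outer (hv : ContDiff ℝ ∞ v) {c f g h : (Fin N → ℝ) → ℝ}
    (hc : ContDiff ℝ ∞ c) (hf : ContDiff ℝ ∞ f) (hg : ContDiff ℝ ∞ g)
    (hh : ContDiff ℝ ∞ h) (x : Fin N → ℝ) (k : Fin N) :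
    brktV c v (brktV c v (dF f) (dF g)) (dF h) x k
      = c x * (Dop v h x *
          ((Dop v c x * Dop v g x + c x * Dop v (Dop v g) x) * pd k (Dop v f) x
            + (c x * Dop v g x) * pd k (Dop v (Dop v f)) x
            - ((Dop v c x * Dop v f x + c x * Dop v (Dop v f) x) * pd k (Dop v g) x
              + (c x * Dop v f x) * pd k (Dop v (Dop v g)) x))
        - (c x * Dop v g x * Dop v (Dop v f) x
            - c x * Dop v f x * Dop v (Dop v g) x) * pd k (Dop v h) x) := by
  have hA := Dop_contDiff hv hf
  have hB := Dop_contDiff hv hg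
  rw [brktV_dF_eq hv hc hf hg]
  unfold brktV
  rw [pairing_dF, lieD_dF hv hh x k,
    pairing_comb x,
    lieD_comb hv (hc.mul hB) (hc.mul hA) hA hB x k,
    Dop_mul hv hc hB x, Dop_mul hv hc hA x]

end Aux

/-- the cyclic Jacobi identity for `[·,·]_v` on differentials of smooth
functions. -/
theorem stmt0 {N : ℕ} (hN : 1 ≤ N)
    (v : (Fin N → ℝ) → (Fin N → ℝ)) (hv : ContDiff ℝ ∞ v)
    (c : (Fin N → ℝ) → ℝ) (hc : ContDiff ℝ ∞ c)
    (f g h : (Fin N → ℝ) → ℝ)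
    (hf : ContDiff ℝ ∞ f) (hg : ContDiff ℝ ∞ g) (hh : ContDiff ℝ ∞ h) :
    ∀ (x : Fin N → ℝ) (k : Fin N),
      brktV c v (brktV c v (dF f) (dF g)) (dF h) x k
        + brktV c v (brktV c v (dF h) (dF f)) (dF g) x k
        + brktV c v (brktV c v (dF g) (dF h)) (dF f) x k = 0 := by
  intro x k
  rw [brkt_outer hv hc hf hg hh x k, brkt_outer hv hc hh hf hg x k,
    brkt_outer hv hc hg hh hf x k]
  ring
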